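/- arXiv:2104.11605 — 2 statements merged into one kernel-verified Lean document; each statement's English description precedes it below -/
import Mathlib

section
/- Let C ⊆ ℝ^N be open and convex, λ₁,…,λ_m positive weights summing to 1, points x₁,…,x_m in C and y₁ ≤ y₂ ≤ ⋯ ≤ y_m in C satisfying ∑_{k=1}^n λ_k x_k ≤ ∑_{k=1}^n λ_k y_k for all n < m and ∑_{k=1}^m λ_k x_k = ∑_{k=1}^m λ_k y_k (R↑-majorization). Then for every Gâteaux differentiable convex function Φ : C → ℝ with isotone gradient, ∑_{k=1}^m λ_k Φ(x_k) ≥ ∑_{k=1}^m λ_k Φ(y_k). -/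
open Finset

/-- Abel summation positivity: if `c` is nondecreasing, partial sums of `d` are `≤ 0`
and the total sum is `0`, then `∑ c k * d k ≥ 0`. -/
lemma abel_nonneg (m : ℕ) (c d : ℕ → ℝ)
    (hc : ∀ i, i + 1 < m → c i ≤ c (i + 1))
    (hpart : ∀ n < m, ∑ k ∈ Finset.range n, d k ≤ 0)
    (htot : ∑ k ∈ Finset.range m, d k = 0) :
    0 ≤ ∑ k ∈ Finset.range m, c k * d k := by
  have h := Finset.sum_range_by_parts c d m
  simp only [smul_eq_mul] at h
  rw [h, htot, mul_zero, zero_sub, le_neg, neg_zero]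
  apply Finset.sum_nonpos
  intro i hi
  rw [Finset.mem_range] at hi
  have hi1 : i + 1 < m := by omega
  exact mul_nonpos_of_nonneg_of_nonpos (by linarith [hc i hi1])
    (hpart (i + 1) hi1)

/-- Gradient inequality for convex functions. -/
lemma grad_ineq {N : ℕ} {C : Set (Fin N → ℝ)} {Φ : (Fin N → ℝ) → ℝ}
    (hconv : ConvexOn ℝ C Φ) {u v : Fin N → ℝ} (hu : u ∈ C) (hv : v ∈ C)
    (hd : DifferentiableAt ℝ Φ v) :
    fderiv ℝ Φ v (u - v) ≤ Φ u - Φ v := by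
  set L := fderiv ℝ Φ v
  -- the curve c t = v + t • (u - v)
  have hcurve : HasDerivAt (fun t : ℝ => v + t • (u - v)) (u - v) 0 := by
    have h1 : HasDerivAt (fun t : ℝ => t • (u - v)) ((1:ℝ) • (u - v)) 0 :=
      (hasDerivAt_id (0:ℝ)).smul_const (u - v)
    simpa using h1.const_add v
  have hcomp : HasDerivAt (fun t : ℝ => Φ (v + t • (u - v))) (L (u - v)) 0 := by
    have hd' : HasFDerivAt Φ (fderiv ℝ Φ v) (v + (0:ℝ) • (u - v)) := by
      simpa using hd.hasFDerivAt
    exact hd'.comp_hasDerivAt 0 hcurve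
  have hslope : Filter.Tendsto (slope (fun t : ℝ => Φ (v + t • (u - v))) 0)
      (nhdsWithin 0 (Set.Ioi 0)) (nhds (L (u - v))) := by
    have := hasDerivAt_iff_tendsto_slope.mp hcomp
    exact this.mono_left (nhdsWithin_mono _ (fun t ht => ne_of_gt ht))
  refine le_of_tendsto hslope ?_
  have hIoc : Set.Ioc (0:ℝ) 1 ∈ nhdsWithin (0:ℝ) (Set.Ioi 0) :=
    Ioc_mem_nhdsGT_of_mem (by constructor <;> norm_num)
  filter_upwards [hIoc] with t ht
  obtain ⟨ht0, ht1⟩ := ht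
  rw [slope_def_field]
  have hcvx : Φ (v + t • (u - v)) ≤ (1 - t) * Φ v + t * Φ u := by
    have := hconv.2 hv hu (by linarith : (0:ℝ) ≤ 1 - t) (le_of_lt ht0) (by ring)
    have hpt : (1 - t) • v + t • u = v + t • (u - v) := by
      ext i; simp [smul_sub]; ring
    rw [hpt] at this
    simpa [smul_eq_mul] using this
  simp only [zero_smul, add_zero, sub_zero]
  rw [div_le_iff₀ ht0]
  calc Φ (v + t • (u - v)) - Φ v ≤ (1 - t) * Φ v + t * Φ u - Φ v := by linarith
    _ = (Φ u - Φ v) * t := by ring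

/-- R↑-majorization case: with `y₁ ≤ ⋯ ≤ y_m` increasing, the majorization inequality is
reversed: `∑ λₖ Φ(xₖ) ≥ ∑ λₖ Φ(yₖ)` for every Gâteaux differentiable convex `Φ` with
isotone gradient. -/
theorem stmt14 (N m : ℕ) (C : Set (Fin N → ℝ)) (hCo : IsOpen C) (hCc : Convex ℝ C)
    (w : ℕ → ℝ) (hw : ∀ k < m, 0 < w k)
    (hw1 : ∑ k ∈ Finset.range m, w k = 1)
    (x y : ℕ → Fin N → ℝ) (hxC : ∀ k < m, x k ∈ C) (hyC : ∀ k < m, y k ∈ C)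
    (hinc : ∀ i j, i ≤ j → j < m → y i ≤ y j)
    (hmaj : ∀ n < m, ∑ k ∈ Finset.range n, w k • x k ≤ ∑ k ∈ Finset.range n, w k • y k)
    (heq : ∑ k ∈ Finset.range m, w k • x k = ∑ k ∈ Finset.range m, w k • y k)
    (Φ : (Fin N → ℝ) → ℝ)
    (hdiff : ∀ z ∈ C, DifferentiableAt ℝ Φ z) (hconv : ConvexOn ℝ C Φ)
    (hgrad : ∀ u ∈ C, ∀ v ∈ C, u ≤ v →
      ∀ i : Fin N, fderiv ℝ Φ u (Pi.single i 1) ≤ fderiv ℝ Φ v (Pi.single i 1)) :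
    ∑ k ∈ Finset.range m, w k * Φ (y k) ≤ ∑ k ∈ Finset.range m, w k * Φ (x k) := by
  -- abbreviation for directional derivatives
  set D : ℕ → Fin N → ℝ := fun k i => fderiv ℝ Φ (y k) (Pi.single i 1) with hD
  -- expand fderiv in components
  have expand : ∀ k < m, fderiv ℝ Φ (y k) (x k - y k)
      = ∑ i : Fin N, (x k i - y k i) * D k i := by
    intro k hk
    have hrep : (x k - y k) = ∑ i : Fin N, (x k i - y k i) • (Pi.single i 1 : Fin N → ℝ) := by
      ext j
      simp [Finset.sum_apply, Pi.single_apply]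
    rw [hrep, map_sum]
    simp [hD, smul_eq_mul]
  -- main estimate: sum of inner products is nonneg
  have key : 0 ≤ ∑ k ∈ Finset.range m, w k * fderiv ℝ Φ (y k) (x k - y k) := by
    have hrw : ∑ k ∈ Finset.range m, w k * fderiv ℝ Φ (y k) (x k - y k)
        = ∑ i : Fin N, ∑ k ∈ Finset.range m, D k i * (w k * (x k i - y k i)) := by
      rw [Finset.sum_comm]
      apply Finset.sum_congr rfl
      intro k hk
      rw [Finset.mem_range] at hk
      rw [expand k hk, Finset.mul_sum]
      apply Finset.sum_congr rfl
      intro i _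
      ring
    rw [hrw]
    apply Finset.sum_nonneg
    intro i _
    apply abel_nonneg m (fun k => D k i) (fun k => w k * (x k i - y k i))
    · intro j hj
      exact hgrad (y j) (hyC j (by omega)) (y (j + 1)) (hyC (j + 1) hj)
        (hinc j (j + 1) (Nat.le_succ j) hj) i
    · intro n hn
      have := hmaj n hn
      have h := this i
      simp only [Finset.sum_apply, Pi.smul_apply, smul_eq_mul] at h
      simp only [mul_sub]
      rw [Finset.sum_sub_distrib]
      linarith [h]
    · have h := congrFun heq i
      simp only [Finset.sum_apply, Pi.smul_apply, smul_eq_mul] at h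
      simp only [mul_sub]
      rw [Finset.sum_sub_distrib]
      linarith [h]
  -- convexity termwise
  have hterm : ∀ k < m, w k * Φ (y k) + w k * fderiv ℝ Φ (y k) (x k - y k)
      ≤ w k * Φ (x k) := by
    intro k hk
    have h := grad_ineq hconv (hxC k hk) (hyC k hk) (hdiff (y k) (hyC k hk))
    have hwk := hw k hk
    nlinarith [h]
  have hsum : ∑ k ∈ Finset.range m, (w k * Φ (y k) + w k * fderiv ℝ Φ (y k) (x k - y k))
      ≤ ∑ k ∈ Finset.range m, w k * Φ (x k) := by
    apply Finset.sum_le_sum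
    intro k hk
    exact hterm k (Finset.mem_range.mp hk)
  rw [Finset.sum_add_distrib] at hsum
  linarith
end

section
/- Let C ⊆ ℝ^N be open and convex and Φ : C → ℝ a differentiable convex function with isotone gradient. If x₁, x₂, y₁, y₂ ∈ C satisfy y₂ ≤ x₂ ≤ x₁ ≤ y₁ and (x₁ + x₂)/2 = (y₁ + y₂)/2, then Φ(x₁) + Φ(x₂) ≤ Φ(y₁) + Φ(y₂). -/
lemma clm_apply_eq_sum {N : ℕ} (L : (Fin N → ℝ) →L[ℝ] ℝ) (w : Fin N → ℝ) :
    L w = ∑ i, w i * L (Pi.single i 1) := by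
  have hw : w = ∑ i, w i • (Pi.single i 1 : Fin N → ℝ) := by
    funext j
    simp [Finset.sum_apply, Pi.single_apply, Finset.sum_ite_eq']
  conv_lhs => rw [hw]
  simp [map_sum, smul_eq_mul]

/-- Generalized parallelogram law: for a differentiable convex `Φ` with isotone gradient
on an open convex `C ⊆ ℝ^N`, if `y₂ ≤ x₂ ≤ x₁ ≤ y₁` and `(x₁+x₂)/2 = (y₁+y₂)/2`, then
`Φ(x₁) + Φ(x₂) ≤ Φ(y₁) + Φ(y₂)`. -/
theorem stmt17 (N : ℕ) (C : Set (Fin N → ℝ)) (hCo : IsOpen C) (hCc : Convex ℝ C)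
    (Φ : (Fin N → ℝ) → ℝ)
    (hdiff : ∀ z ∈ C, DifferentiableAt ℝ Φ z) (hconv : ConvexOn ℝ C Φ)
    (hgrad : ∀ u ∈ C, ∀ v ∈ C, u ≤ v →
      ∀ i : Fin N, fderiv ℝ Φ u (Pi.single i 1) ≤ fderiv ℝ Φ v (Pi.single i 1))
    (x₁ x₂ y₁ y₂ : Fin N → ℝ) (hx₁ : x₁ ∈ C) (hx₂ : x₂ ∈ C) (hy₁ : y₁ ∈ C) (hy₂ : y₂ ∈ C)
    (h1 : y₂ ≤ x₂) (h2 : x₂ ≤ x₁) (h3 : x₁ ≤ y₁)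
    (hmid : (2:ℝ)⁻¹ • (x₁ + x₂) = (2:ℝ)⁻¹ • (y₁ + y₂)) :
    Φ x₁ + Φ x₂ ≤ Φ y₁ + Φ y₂ := by
  set d : Fin N → ℝ := y₁ - x₁ with hd
  have hdnn : ∀ i, 0 ≤ d i := fun i => sub_nonneg.2 (h3 i)
  have hsum : x₁ + x₂ = y₁ + y₂ := by
    have := congrArg (fun w => (2:ℝ) • w) hmid
    simpa [smul_smul] using this
  have hy₂d : y₂ = x₂ - d := by
    funext i
    have := congrFun hsum i
    simp only [Pi.add_apply] at this
    simp [hd]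
    linarith
  -- membership of segment points
  have hmem₁ : ∀ t ∈ Set.Icc (0:ℝ) 1, x₁ + t • d ∈ C := by
    intro t ht
    have : x₁ + t • d = (1 - t) • x₁ + t • y₁ := by
      funext i; simp [hd]; ring
    rw [this]
    exact hCc hx₁ hy₁ (by linarith [ht.2]) ht.1 (by ring)
  have hmem₂ : ∀ t ∈ Set.Icc (0:ℝ) 1, x₂ - t • d ∈ C := by
    intro t ht
    have : x₂ - t • d = (1 - t) • x₂ + t • y₂ := by
      funext i; simp [hy₂d, hd]; ring
    rw [this]
    exact hCc hx₂ hy₂ (by linarith [ht.2]) ht.1 (by ring)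
  set f : ℝ → ℝ := fun t => Φ (x₁ + t • d) + Φ (x₂ - t • d) with hf
  have hder : ∀ t ∈ Set.Icc (0:ℝ) 1, HasDerivAt f
      (fderiv ℝ Φ (x₁ + t • d) d - fderiv ℝ Φ (x₂ - t • d) d) t := by
    intro t ht
    have hγ₁ : HasDerivAt (fun s : ℝ => x₁ + s • d) d t := by
      simpa using ((hasDerivAt_id t).smul_const d).const_add x₁
    have hγ₂ : HasDerivAt (fun s : ℝ => x₂ - s • d) (-d) t := by
      simpa using ((hasDerivAt_id t).smul_const d).const_sub x₂
    have hΦ₁ := ((hdiff _ (hmem₁ t ht)).hasFDerivAt).comp_hasDerivAt t hγ₁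
    have hΦ₂ := ((hdiff _ (hmem₂ t ht)).hasFDerivAt).comp_hasDerivAt t hγ₂
    have := hΦ₁.add hΦ₂
    convert this using 1
    · rfl
    · rfl
    · funext s; simp [hf, sub_eq_add_neg]
    · simp [sub_eq_add_neg, map_neg]
  have hmono : MonotoneOn f (Set.Icc (0:ℝ) 1) := by
    apply monotoneOn_of_deriv_nonneg (convex_Icc 0 1)
    · intro t ht
      exact (hder t ht).continuousAt.continuousWithinAt
    · intro t ht
      rw [interior_Icc] at ht
      exact (hder t (Set.mem_Icc_of_Ioo ht)).differentiableAt.differentiableWithinAt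
    · intro t ht
      rw [interior_Icc] at ht
      have ht' : t ∈ Set.Icc (0:ℝ) 1 := Set.mem_Icc_of_Ioo ht
      rw [(hder t ht').deriv]
      have hle : x₂ - t • d ≤ x₁ + t • d := by
        intro i
        have := mul_nonneg ht.1.le (hdnn i)
        simp only [Pi.sub_apply, Pi.add_apply, Pi.smul_apply, smul_eq_mul]
        have := h2 i
        linarith
      have hg := hgrad _ (hmem₂ t ht') _ (hmem₁ t ht') hle
      rw [sub_nonneg, clm_apply_eq_sum, clm_apply_eq_sum]
      exact Finset.sum_le_sum fun i _ =>
        mul_le_mul_of_nonneg_left (hg i) (hdnn i)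
  have h01 := hmono (Set.left_mem_Icc.2 zero_le_one) (Set.right_mem_Icc.2 zero_le_one) zero_le_one
  have hf0 : f 0 = Φ x₁ + Φ x₂ := by simp [hf]
  have hf1 : f 1 = Φ y₁ + Φ y₂ := by
    have e1 : x₁ + d = y₁ := by funext i; simp [hd]
    have e2 : x₂ - d = y₂ := by funext i; simp [hy₂d]
    simp [hf, e1, e2]
  rw [← hf0, ← hf1]
  exact h01
end
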